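/- (If you have lots of gunpowder, shoot early.) For each τ > 0, let b^τ be an optimal intervention of duration τ with start time t_i^τ. Then I_{b^τ}(t_i^τ) ≤ (1 − Scrit)/(γ·τ); consequently, I_{b^τ}(t_i^τ) → 0 and S_{b^τ}(t_i^τ) → 1 as τ → ∞. -/

import Mathlib

noncomputable section

/-- SIR parameters: β > γ > 0. -/
structure SIRParams where
  β : ℝ
  γ : ℝ
  hγ : 0 < γ
  hβγ : γ < β

/-- Basic reproduction number R0 = β/γ. -/
def SIRParams.R0 (p : SIRParams) : ℝ := p.β / p.γ

/-- Critical susceptible fraction Scrit = γ/β = 1/R0. -/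
def SIRParams.Scrit (p : SIRParams) : ℝ := p.γ / p.β

/-- An intervention with start time `ti` and duration `τ`: a right-continuous
function `b : ℝ → [0,1]` with finitely many discontinuity points such that
`b t = 1` for all `t ∉ [ti, ti + τ]`. -/
structure Intervention (p : SIRParams) where
  b : ℝ → ℝ
  ti : ℝ
  τ : ℝ
  hτ : 0 < τ
  mem_Icc : ∀ t, b t ∈ Set.Icc (0 : ℝ) 1
  rightCont : ∀ t, ContinuousWithinAt b (Set.Ici t) t
  finiteDisc : {t : ℝ | ¬ ContinuousAt b t}.Finite
  outside : ∀ t, t ∉ Set.Icc ti (ti + τ) → b t = 1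

/-- The null intervention b ≡ 1. -/
def nullB : ℝ → ℝ := fun _ => 1

/-- An SIR trajectory under transmission-reduction function `b` on a set `J ⊆ ℝ`
(an interval unbounded above, encoded as being upward closed): a pair of
continuous functions `S, I : ℝ → ℝ` with `0 < S ≤ 1`, `0 ≤ I`, `S + I ≤ 1` on `J`,
satisfying the integral form of the SIR equations. -/
structure IsSIRTrajectory (p : SIRParams) (b : ℝ → ℝ) (J : Set ℝ) (S I : ℝ → ℝ) : Prop where
  upClosed : ∀ t ∈ J, ∀ s, t ≤ s → s ∈ J
  contS : ContinuousOn S J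
  contI : ContinuousOn I J
  Spos : ∀ t ∈ J, 0 < S t
  Sle_one : ∀ t ∈ J, S t ≤ 1
  Inonneg : ∀ t ∈ J, 0 ≤ I t
  sum_le_one : ∀ t ∈ J, S t + I t ≤ 1
  S_eq : ∀ t0 ∈ J, ∀ t ∈ J, t0 ≤ t →
    S t = S t0 - ∫ s in t0..t, b s * p.β * S s * I s
  I_eq : ∀ t0 ∈ J, ∀ t ∈ J, t0 ≤ t →
    I t = I t0 + ∫ s in t0..t, (b s * p.β * S s * I s - p.γ * I s)

/-- `ImaxAt J I t = sup_{x ≥ t, x ∈ J} I x`. -/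
def ImaxAt (J : Set ℝ) (I : ℝ → ℝ) (t : ℝ) : ℝ := sSup (I '' (J ∩ Set.Ici t))

/-- Reference emerging-epidemic trajectory: an SIR trajectory without
intervention on ℝ with I₁ > 0 everywhere, S₁ → 1 and I₁ → 0 as t → −∞. -/
def IsReference (p : SIRParams) (S1 I1 : ℝ → ℝ) : Prop :=
  IsSIRTrajectory p nullB Set.univ S1 I1 ∧
  (∀ t, 0 < I1 t) ∧
  Filter.Tendsto S1 Filter.atBot (nhds 1) ∧
  Filter.Tendsto I1 Filter.atBot (nhds 0)

/-- The controlled trajectory of intervention `bi`: the SIR trajectory under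
`bi.b` on ℝ coinciding with the reference trajectory `(S1, I1)` on `(−∞, bi.ti]`. -/
def IsControlled (p : SIRParams) (S1 I1 : ℝ → ℝ) (bi : Intervention p)
    (S I : ℝ → ℝ) : Prop :=
  IsSIRTrajectory p bi.b Set.univ S I ∧ ∀ t ≤ bi.ti, S t = S1 t ∧ I t = I1 t

/-- Global peak prevalence of a controlled trajectory: `Imax = sup_{t ∈ ℝ} I t`. -/
def Imax (I : ℝ → ℝ) : ℝ := sSup (Set.range I)

/-- An intervention `bs` (with controlled trajectory `(Sb, Ib)`) is optimal for
its duration if its peak prevalence is at most that of any intervention of the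
same duration (with any start time). -/
def IsOptimal (p : SIRParams) (S1 I1 : ℝ → ℝ) (bs : Intervention p)
    (Sb Ib : ℝ → ℝ) : Prop :=
  IsControlled p S1 I1 bs Sb Ib ∧
  ∀ (b : Intervention p), b.τ = bs.τ →
    ∀ S I : ℝ → ℝ, IsControlled p S1 I1 b S I → Imax Ib ≤ Imax I

/-- A maintain–suppress intervention with maintenance fraction `f ∈ [0,1]`:
`b t = γ/(β·S t)` on `[ti, ti + f·τ)` and `b t = 0` on `[ti + f·τ, ti + τ]`,
where `S` is the controlled trajectory's susceptible fraction. -/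
def IsMaintainSuppress (p : SIRParams) (bi : Intervention p) (f : ℝ)
    (S : ℝ → ℝ) : Prop :=
  f ∈ Set.Icc (0 : ℝ) 1 ∧
  (∀ t ∈ Set.Ico bi.ti (bi.ti + f * bi.τ), bi.b t = p.γ / (p.β * S t)) ∧
  (∀ t ∈ Set.Icc (bi.ti + f * bi.τ) (bi.ti + bi.τ), bi.b t = 0)

/-- A full suppression intervention: `b t = 0` throughout `[ti, ti + τ]`. -/
def IsFullSuppression (p : SIRParams) (bi : Intervention p) : Prop :=
  ∀ t ∈ Set.Icc bi.ti (bi.ti + bi.τ), bi.b t = 0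

/-- A fixed control intervention with strictness `σ ∈ [0,1]`: `b t = σ`
throughout `[ti, ti + τ]`. -/
def IsFixedControl (p : SIRParams) (bi : Intervention p) (σ : ℝ) : Prop :=
  σ ∈ Set.Icc (0 : ℝ) 1 ∧ ∀ t ∈ Set.Icc bi.ti (bi.ti + bi.τ), bi.b t = σ


open MeasureTheory Set Filter Topology


theorem sir_post (β γ s₀ i₀ T : ℝ) (hβ : 0 < β) (hγ : 0 < γ) (hs₀ : s₀ = γ / β)
    (hi₀ : 0 < i₀) :
    ∃ S2 I2 : ℝ → ℝ, S2 T = s₀ ∧ I2 T = i₀ ∧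
      Continuous S2 ∧ Continuous I2 ∧
      (∀ t, T < t → HasDerivAt S2 (-(β * S2 t * I2 t)) t) ∧
      (∀ t, T < t → HasDerivAt I2 ((β * S2 t - γ) * I2 t) t) ∧
      (∀ t, T ≤ t → 0 < S2 t ∧ S2 t ≤ s₀ ∧ 0 ≤ I2 t ∧ I2 t ≤ i₀ ∧ S2 t + I2 t ≤ s₀ + i₀) := by
  have hs₀pos : 0 < s₀ := hs₀ ▸ div_pos hγ hβ
  have hβs₀ : β * s₀ = γ := by rw [hs₀]; field_simp
  set V₀ := s₀ + i₀ with hV₀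
  have hV₀pos : 0 < V₀ := by positivity
  set F : ℝ → ℝ := fun w => V₀ - γ * w - s₀ * Real.exp (-(β * w)) with hF
  have hFcont : Continuous F := by fun_prop
  have hFd : ∀ w, HasDerivAt F (γ * (Real.exp (-(β * w)) - 1)) w := by
    intro w
    have h1 : HasDerivAt (fun w : ℝ => -(β * w)) (-β) w := by
      exact (((hasDerivAt_id w).const_mul β).neg).congr_deriv (by ring)
    have h2 : HasDerivAt (fun w : ℝ => Real.exp (-(β * w))) (Real.exp (-(β * w)) * -β) w :=
      (Real.hasDerivAt_exp _).comp w h1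
    have h3 := ((hasDerivAt_const w V₀).sub ((hasDerivAt_id w).const_mul γ)).sub (h2.const_mul s₀)
    exact h3.congr_deriv (by rw [← hβs₀]; ring)
  have hF'cont : Continuous fun w => γ * (Real.exp (-(β * w)) - 1) := by fun_prop
  have hF0 : F 0 = i₀ := by simp [hF, hV₀]
  set Z : Set ℝ := {w | 0 ≤ w ∧ F w ≤ 0} with hZ
  have hZne : Z.Nonempty := by
    refine ⟨(V₀ + 1) / γ, le_of_lt (by positivity), ?_⟩
    have h1 : γ * ((V₀ + 1) / γ) = V₀ + 1 := by field_simp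
    have h2 : 0 < Real.exp (-(β * ((V₀ + 1) / γ))) := Real.exp_pos _
    simp only [hF]
    nlinarith
  have hZbdd : BddBelow Z := ⟨0, fun x hx => hx.1⟩
  have hZcl : IsClosed Z := by
    have : Z = {w | 0 ≤ w} ∩ {w | F w ≤ 0} := rfl
    rw [this]
    exact (isClosed_le continuous_const continuous_id).inter (isClosed_le hFcont continuous_const)
  set xinf := sInf Z with hxinf
  have hmem : xinf ∈ Z := hZcl.csInf_mem hZne hZbdd
  have hxinfnonneg : 0 ≤ xinf := hmem.1
  have hxinfpos : 0 < xinf := by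
    rcases hxinfnonneg.lt_or_eq with h | h
    · exact h
    · exfalso
      have h2 := hmem.2
      rw [← h, hF0] at h2
      linarith
  have hFpos : ∀ w, 0 ≤ w → w < xinf → 0 < F w := by
    intro w h0 hlt
    by_contra h; push_neg at h
    exact absurd (csInf_le hZbdd ⟨h0, h⟩) (not_le.2 hlt)
  have hFxinf : F xinf = 0 := by
    refine le_antisymm hmem.2 ?_
    refine ge_of_tendsto (hFcont.continuousWithinAt (s := Iio xinf) (x := xinf)) ?_
    filter_upwards [Ioo_mem_nhdsLT_of_mem ⟨hxinfpos, le_refl xinf⟩] with w hw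
    exact (hFpos w hw.1.le hw.2).le
  have hFint : ∀ a b : ℝ, (∫ u in a..b, γ * (Real.exp (-(β * u)) - 1)) = F b - F a :=
    fun a b => intervalIntegral.integral_eq_sub_of_hasDerivAt (fun u _ => hFd u)
      (hF'cont.intervalIntegrable a b)
  have hFub : ∀ w, 0 ≤ w → w ≤ xinf → F w ≤ γ * (xinf - w) := by
    intro w h0 hle
    have h1 := hFint w xinf
    have h2 : (∫ _ in w..xinf, (-γ : ℝ)) ≤ ∫ u in w..xinf, γ * (Real.exp (-(β * u)) - 1) := by
      refine intervalIntegral.integral_mono_on hle (intervalIntegrable_const)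
        (hF'cont.intervalIntegrable w xinf) (fun u _ => ?_)
      nlinarith [Real.exp_pos (-(β * u))]
    rw [intervalIntegral.integral_const, h1, hFxinf] at h2
    simp only [smul_eq_mul] at h2
    nlinarith
  have hFle_i₀ : ∀ w, 0 ≤ w → F w ≤ i₀ := by
    intro w h0
    have h1 := hFint 0 w
    have h2 : (∫ u in (0:ℝ)..w, γ * (Real.exp (-(β * u)) - 1)) ≤ ∫ _ in (0:ℝ)..w, (0:ℝ) := by
      refine intervalIntegral.integral_mono_on h0 (hF'cont.intervalIntegrable 0 w)
        (intervalIntegrable_const) (fun u hu => ?_)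
      have : Real.exp (-(β * u)) ≤ 1 := Real.exp_le_one_iff.2 (by nlinarith [hu.1])
      nlinarith
    simp only [intervalIntegral.integral_zero] at h2
    rw [h1, hF0] at h2
    linarith
  set G : ℝ → ℝ := fun x => T + ∫ u in (0:ℝ)..x, (F u)⁻¹ with hG
  have hFinvContOn : ∀ {x : ℝ}, x < xinf → ContinuousOn (fun u => (F u)⁻¹) (Icc 0 x) := by
    intro x hx
    exact ContinuousOn.inv₀ hFcont.continuousOn
      (fun u hu => (hFpos u hu.1 (lt_of_le_of_lt hu.2 hx)).ne')
  have hGint : ∀ {a b : ℝ}, 0 ≤ a → 0 ≤ b → a < xinf → b < xinf →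
      IntervalIntegrable (fun u => (F u)⁻¹) volume a b := by
    intro a b ha hb ha' hb'
    apply ContinuousOn.intervalIntegrable
    apply (hFinvContOn (max_lt ha' hb')).mono
    exact Set.Icc_subset_Icc (le_min ha hb) le_rfl
  have hG0 : G 0 = T := by simp [hG]
  have hGmono : ∀ x y, 0 ≤ x → x < y → y < xinf → G x < G y := by
    intro x y hx hxy hy
    have hxξ : x < xinf := hxy.trans hy
    have h1 := intervalIntegral.integral_add_adjacent_intervals
      (hGint le_rfl hx hxinfpos hxξ) (hGint hx (hx.trans hxy.le) hxξ hy)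
    have h2 : 0 < ∫ u in x..y, (F u)⁻¹ :=
      intervalIntegral.intervalIntegral_pos_of_pos_on (hGint hx (hx.trans hxy.le) hxξ hy)
        (fun u hu => inv_pos.2 (hFpos u (hx.trans hu.1.le) (hu.2.trans hy))) hxy
    simp only [hG]
    linarith
  have hGmono' : ∀ x y, 0 ≤ x → x ≤ y → y < xinf → G x ≤ G y := by
    intro x y hx hxy hy
    rcases hxy.lt_or_eq with h | h
    · exact (hGmono x y hx h hy).le
    · rw [h]
  have hGT : ∀ x, 0 ≤ x → x < xinf → T ≤ G x := by
    intro x h0 hx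
    have : 0 ≤ ∫ u in (0:ℝ)..x, (F u)⁻¹ :=
      intervalIntegral.integral_nonneg h0
        (fun u hu => (inv_pos.2 (hFpos u hu.1 (lt_of_le_of_lt hu.2 hx))).le)
    simp only [hG]
    linarith
  have hGcontOn : ∀ {u : ℝ}, 0 ≤ u → u < xinf → ContinuousOn G (Icc 0 u) := by
    intro u h0 hu
    have hint : IntegrableOn (fun w => (F w)⁻¹) (uIcc 0 u) volume := by
      rw [Set.uIcc_of_le h0]
      exact (hFinvContOn hu).integrableOn_compact isCompact_Icc
    have := intervalIntegral.continuousOn_primitive_interval hint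
    rw [Set.uIcc_of_le h0] at this
    exact continuousOn_const.add this
  have hGderiv : ∀ x, 0 ≤ x → x < xinf → HasDerivAt G (F x)⁻¹ x := by
    intro x h0 hx
    have hmeas : StronglyMeasurableAtFilter (fun u => (F u)⁻¹) (𝓝 x) volume :=
      (hFcont.measurable.inv.stronglyMeasurable).stronglyMeasurableAtFilter
    have hca : ContinuousAt (fun u => (F u)⁻¹) x :=
      hFcont.continuousAt.inv₀ (hFpos x h0 hx).ne'
    exact (intervalIntegral.integral_hasDerivAt_right (hGint le_rfl h0 hxinfpos hx) hmeas
      hca).const_add T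
  have hlogd : ∀ u : ℝ, u < xinf → HasDerivAt (fun u => -(γ⁻¹ * Real.log (xinf - u)))
      ((γ * (xinf - u))⁻¹) u := by
    intro u hu
    have h1 : HasDerivAt (fun u : ℝ => xinf - u) (-1) u := by
      exact ((hasDerivAt_const u xinf).sub (hasDerivAt_id u)).congr_deriv (by ring)
    have h2 := (Real.hasDerivAt_log (by linarith : xinf - u ≠ 0)).comp u h1
    have h3 := (h2.const_mul γ⁻¹).neg
    exact h3.congr_deriv (by rw [mul_inv]; ring)
  have hGlb : ∀ x, 0 ≤ x → x < xinf →
      T + γ⁻¹ * (Real.log xinf - Real.log (xinf - x)) ≤ G x := by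
    intro x h0 hx
    have hrint : IntervalIntegrable (fun u => (γ * (xinf - u))⁻¹) volume 0 x := by
      apply ContinuousOn.intervalIntegrable
      rw [Set.uIcc_of_le h0]
      apply ContinuousOn.inv₀ (by fun_prop)
      intro u hu
      have : 0 < xinf - u := by
        have := hu.2
        linarith [lt_of_le_of_lt hu.2 hx]
      positivity
    have key : (∫ u in (0:ℝ)..x, (γ * (xinf - u))⁻¹) ≤ ∫ u in (0:ℝ)..x, (F u)⁻¹ := by
      refine intervalIntegral.integral_mono_on h0 hrint (hGint le_rfl h0 hxinfpos hx)
        (fun u hu => ?_)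
      have hFu := hFpos u hu.1 (lt_of_le_of_lt hu.2 hx)
      have hub := hFub u hu.1 (le_of_lt (lt_of_le_of_lt hu.2 hx))
      exact inv_anti₀ hFu hub
    have hval : (∫ u in (0:ℝ)..x, (γ * (xinf - u))⁻¹)
        = γ⁻¹ * (Real.log xinf - Real.log (xinf - x)) := by
      have hftc := intervalIntegral.integral_eq_sub_of_hasDerivAt
        (f := fun u => -(γ⁻¹ * Real.log (xinf - u)))
        (f' := fun u => (γ * (xinf - u))⁻¹) (a := 0) (b := x)
        (fun u hu => by
          rw [Set.uIcc_of_le h0] at hu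
          exact hlogd u (lt_of_le_of_lt hu.2 hx)) hrint
      rw [hftc]
      simp only [sub_zero]
      ring
    rw [hval] at key
    simp only [hG]
    linarith
  have hGbig : ∀ t, T ≤ t → ∃ x, 0 ≤ x ∧ x < xinf ∧ t < G x := by
    intro t ht
    set e := Real.exp (-(γ * (t + 1 - T))) with he
    have he1 : e ≤ 1 := Real.exp_le_one_iff.2 (by nlinarith)
    have he0 : 0 < e := Real.exp_pos _
    have h0 : 0 ≤ xinf - xinf * e := by nlinarith
    have hxx : xinf - xinf * e < xinf := by nlinarith
    refine ⟨xinf - xinf * e, h0, hxx, ?_⟩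
    have hlt := hGlb (xinf - xinf * e) h0 hxx
    have hlog : Real.log (xinf - (xinf - xinf * e)) = Real.log xinf + -(γ * (t + 1 - T)) := by
      have h5 : xinf - (xinf - xinf * e) = xinf * e := by ring
      rw [h5, Real.log_mul (ne_of_gt hxinfpos) (ne_of_gt he0), he, Real.log_exp]
    rw [hlog] at hlt
    have h6 : Real.log xinf - (Real.log xinf + -(γ * (t + 1 - T))) = γ * (t + 1 - T) := by ring
    rw [h6] at hlt
    have h7 : γ⁻¹ * (γ * (t + 1 - T)) = t + 1 - T := by field_simp
    rw [h7] at hlt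
    linarith
  set ξ : ℝ → ℝ := fun t => sSup {x | 0 ≤ x ∧ x < xinf ∧ G x ≤ t} with hξdef
  have hξspec : ∀ t, T ≤ t → 0 ≤ ξ t ∧ ξ t < xinf ∧ G (ξ t) = t := by
    intro t ht
    obtain ⟨u, hu0, huξ, hut⟩ := hGbig t ht
    set c : ℝ → ℝ := fun x => max 0 (min x u) with hc
    have hcmaps : ∀ x : ℝ, c x ∈ Icc 0 u :=
      fun x => ⟨le_max_left _ _, max_le hu0 (min_le_right x u)⟩
    have hccont : Continuous c := continuous_const.max (continuous_id.min continuous_const)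
    have hGc : Continuous (G ∘ c) :=
      (hGcontOn hu0 huξ).comp_continuous hccont hcmaps
    have hceq : ∀ x : ℝ, 0 ≤ x → x ≤ u → c x = x := by
      intro x h1 h2
      simp only [hc]
      rw [min_eq_left h2, max_eq_right h1]
    have hset : {x | 0 ≤ x ∧ x < xinf ∧ G x ≤ t} = {x | 0 ≤ x ∧ x ≤ u ∧ (G ∘ c) x ≤ t} := by
      ext x
      simp only [Set.mem_setOf_eq, Function.comp_apply]
      constructor
      · rintro ⟨h1, h2, h3⟩
        have hxu : x ≤ u := by
          by_contra hcon; push_neg at hcon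
          have := hGmono u x hu0 hcon h2
          linarith
        exact ⟨h1, hxu, by rw [hceq x h1 hxu]; exact h3⟩
      · rintro ⟨h1, h2, h3⟩
        refine ⟨h1, lt_of_le_of_lt h2 huξ, ?_⟩
        rwa [hceq x h1 h2] at h3
    have hcl : IsClosed {x : ℝ | 0 ≤ x ∧ x ≤ u ∧ (G ∘ c) x ≤ t} := by
      have hrepr : {x : ℝ | 0 ≤ x ∧ x ≤ u ∧ (G ∘ c) x ≤ t}
          = {x : ℝ | 0 ≤ x} ∩ ({x : ℝ | x ≤ u} ∩ {x : ℝ | (G ∘ c) x ≤ t}) := by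
        ext x; simp [Set.mem_setOf_eq, and_assoc]
      rw [hrepr]
      exact (isClosed_le continuous_const continuous_id).inter
        ((isClosed_le continuous_id continuous_const).inter
          (isClosed_le hGc continuous_const))
    have hne : {x : ℝ | 0 ≤ x ∧ x < xinf ∧ G x ≤ t}.Nonempty :=
      ⟨0, le_rfl, hxinfpos, by rw [hG0]; exact ht⟩
    have hbdd : BddAbove {x : ℝ | 0 ≤ x ∧ x < xinf ∧ G x ≤ t} := by
      rw [hset]
      exact ⟨u, fun x hx => hx.2.1⟩
    have hmemt : ξ t ∈ {x | 0 ≤ x ∧ x < xinf ∧ G x ≤ t} := by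
      have : ξ t ∈ {x : ℝ | 0 ≤ x ∧ x ≤ u ∧ (G ∘ c) x ≤ t} := by
        rw [hξdef]
        simp only [hset]
        exact hcl.csSup_mem (hset ▸ hne) (hset ▸ hbdd)
      rw [← hset] at this
      exact this
    obtain ⟨h1, h2, h3⟩ := hmemt
    refine ⟨h1, h2, le_antisymm h3 ?_⟩
    by_contra hlt; push_neg at hlt
    have hξu : ξ t < u := by
      rcases lt_or_ge (ξ t) u with h | h
      · exact h
      · exfalso
        have := hGmono' u (ξ t) hu0 h h2
        linarith
    have hGcξ : (G ∘ c) (ξ t) < t := by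
      rw [Function.comp_apply, hceq _ h1 hξu.le]
      exact hlt
    have hO : IsOpen ({x : ℝ | (G ∘ c) x < t} ∩ Iio u) :=
      (isOpen_lt hGc continuous_const).inter isOpen_Iio
    obtain ⟨ε, hε, hball⟩ := Metric.isOpen_iff.1 hO (ξ t) ⟨hGcξ, hξu⟩
    have hmem2 : ξ t + ε / 2 ∈ {x : ℝ | (G ∘ c) x < t} ∩ Iio u := by
      apply hball
      rw [Metric.mem_ball, Real.dist_eq,
        abs_of_pos (by linarith : (0:ℝ) < ξ t + ε / 2 - ξ t)]
      linarith
    have hx' : ξ t + ε / 2 ∈ {x : ℝ | 0 ≤ x ∧ x < xinf ∧ G x ≤ t} := by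
      rw [hset]
      exact ⟨by linarith, hmem2.2.le, hmem2.1.le⟩
    have h9 : ξ t + ε / 2 ≤ ξ t := le_csSup hbdd hx'
    linarith
  have hξzero : ∀ t, t ≤ T → ξ t = 0 := by
    intro t ht
    rcases ht.lt_or_eq with hlt | heq
    · have hempty : {x : ℝ | 0 ≤ x ∧ x < xinf ∧ G x ≤ t} = ∅ := by
        ext x
        simp only [Set.mem_setOf_eq, Set.mem_empty_iff_false, iff_false, not_and]
        intro h1 h2 h3
        have := hGT x h1 h2
        linarith
      rw [hξdef]
      simp only [hempty]
      exact Real.sSup_empty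
    · have hsingle : {x : ℝ | 0 ≤ x ∧ x < xinf ∧ G x ≤ t} = {0} := by
        ext x
        simp only [Set.mem_setOf_eq, Set.mem_singleton_iff]
        constructor
        · rintro ⟨h1, h2, h3⟩
          by_contra hne
          have hx0 : 0 < x := h1.lt_of_ne (Ne.symm hne)
          have := hGmono 0 x le_rfl hx0 h2
          rw [hG0, ← heq] at this
          linarith
        · rintro rfl
          exact ⟨le_rfl, hxinfpos, by rw [hG0, heq]⟩
      rw [hξdef]
      simp only [hsingle]
      exact csSup_singleton 0
  have hξcont : ContinuousOn ξ (Ici T) := by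
    intro t0 ht0
    obtain ⟨hx0, hx0ξ, hGx0⟩ := hξspec t0 ht0
    rw [Metric.continuousWithinAt_iff]
    intro ε hε
    set x0 := ξ t0 with hx0def
    set xp := min (x0 + ε / 2) ((x0 + xinf) / 2) with hxp
    have hxp1 : x0 < xp := lt_min (by linarith) (by linarith)
    have hxp2 : xp < xinf := lt_of_le_of_lt (min_le_right _ _) (by linarith)
    have hxp0 : 0 ≤ xp := le_of_lt (lt_of_le_of_lt hx0 hxp1)
    have hGxp : G x0 < G xp := hGmono x0 xp hx0 hxp1 hxp2
    by_cases h0 : x0 = 0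
    · refine ⟨G xp - t0, by rw [← hGx0]; linarith, fun y hy hdist => ?_⟩
      obtain ⟨hy0, hyξ, hGy⟩ := hξspec y hy
      rw [Real.dist_eq] at hdist
      have hd1 : y < G xp := by
        have := (abs_lt.1 hdist).2
        linarith
      have hylt : ξ y < xp := by
        by_contra hcon; push_neg at hcon
        have := hGmono' xp (ξ y) hxp0 hcon hyξ
        rw [hGy] at this
        linarith
      rw [Real.dist_eq, abs_lt]
      have h5 := min_le_left (x0 + ε / 2) ((x0 + xinf) / 2)
      constructor
      · linarith [hy0]
      · linarith [hylt.trans_le h5]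
    · have hx0pos : 0 < x0 := hx0.lt_of_ne (Ne.symm h0)
      set xm := max (x0 - ε / 2) (x0 / 2) with hxm
      have hxm0 : 0 ≤ xm := le_max_of_le_right (by linarith)
      have hxm1 : xm < x0 := max_lt (by linarith) (by linarith)
      have hGxm : G xm < G x0 := hGmono xm x0 hxm0 hxm1 hx0ξ
      refine ⟨min (G xp - t0) (t0 - G xm), lt_min (by rw [← hGx0]; linarith)
        (by rw [← hGx0]; linarith), fun y hy hdist => ?_⟩
      obtain ⟨hy0, hyξ, hGy⟩ := hξspec y hy
      rw [Real.dist_eq] at hdist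
      have habs := abs_lt.1 hdist
      have hd1 : y < G xp := by
        have h5 := min_le_left (G xp - t0) (t0 - G xm)
        linarith [habs.2]
      have hd2 : G xm < y := by
        have h5 := min_le_right (G xp - t0) (t0 - G xm)
        linarith [habs.1]
      have hylt : ξ y < xp := by
        by_contra hcon; push_neg at hcon
        have := hGmono' xp (ξ y) hxp0 hcon hyξ
        rw [hGy] at this
        linarith
      have hygt : xm < ξ y := by
        by_contra hcon; push_neg at hcon
        have := hGmono' (ξ y) xm hy0 hcon (hxm1.trans hx0ξ)
        rw [hGy] at this
        linarith
      rw [Real.dist_eq, abs_lt]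
      have h5 := min_le_left (x0 + ε / 2) ((x0 + xinf) / 2)
      have h6 := le_max_left (x0 - ε / 2) (x0 / 2)
      constructor
      · linarith
      · linarith [hylt.trans_le h5]
  have hξderiv : ∀ t, T < t → HasDerivAt ξ (F (ξ t)) t := by
    intro t ht
    obtain ⟨h0, hξlt, hGxt⟩ := hξspec t ht.le
    have hpos : 0 < ξ t := by
      rcases h0.lt_or_eq with h | h
      · exact h
      · exfalso
        rw [← h, hG0] at hGxt
        linarith
    have hctsAt : ContinuousAt ξ t := (hξcont t ht.le).continuousAt (Ici_mem_nhds ht)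
    have hGd : HasDerivAt G (F (ξ t))⁻¹ (ξ t) := hGderiv _ h0 hξlt
    have hinv : ∀ᶠ y in 𝓝 t, G (ξ y) = y := by
      filter_upwards [Ioi_mem_nhds ht] with y hy
      exact (hξspec y hy.le).2.2
    have := HasDerivAt.of_local_left_inverse hctsAt hGd
      (inv_ne_zero (hFpos _ h0 hξlt).ne') hinv
    rwa [inv_inv] at this
  have hξct : Continuous ξ := by
    rw [continuous_iff_continuousAt]
    intro t
    rcases lt_trichotomy t T with h | h | h
    · have hev : ξ =ᶠ[𝓝 t] fun _ => (0:ℝ) := by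
        filter_upwards [Iio_mem_nhds h] with y hy
        exact hξzero y hy.le
      exact (continuousAt_congr hev).2 continuousAt_const
    · subst h
      rw [continuousAt_iff_continuous_left_right]
      constructor
      · exact continuousWithinAt_const.congr (fun y hy => hξzero y hy) (hξzero t le_rfl)
      · exact hξcont t (mem_Ici.2 le_rfl)
    · exact (hξcont t h.le).continuousAt (Ici_mem_nhds h)
  refine ⟨fun t => s₀ * Real.exp (-(β * ξ t)), fun t => F (ξ t), ?_, ?_, ?_, ?_, ?_, ?_, ?_⟩
  · simp only [hξzero T le_rfl]
    simp
  · simp only [hξzero T le_rfl]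
    exact hF0
  · fun_prop
  · exact hFcont.comp hξct
  · intro t ht
    have hξd := hξderiv t ht
    have h1 : HasDerivAt (fun t => -(β * ξ t)) (-(β * F (ξ t))) t := (hξd.const_mul β).neg
    have h2 := (Real.hasDerivAt_exp _).comp t h1
    have h3 := h2.const_mul s₀
    exact h3.congr_deriv (by beta_reduce; ring)
  · intro t ht
    have hξd := hξderiv t ht
    have h2 := (hFd (ξ t)).comp t hξd
    exact h2.congr_deriv (by beta_reduce; rw [← hβs₀]; ring)
  · intro t ht
    obtain ⟨h0, hlt, hGt⟩ := hξspec t ht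
    have he1 : Real.exp (-(β * ξ t)) ≤ 1 :=
      Real.exp_le_one_iff.2 (neg_nonpos.2 (mul_nonneg hβ.le h0))
    have he0 : 0 < Real.exp (-(β * ξ t)) := Real.exp_pos _
    refine ⟨by positivity, mul_le_of_le_one_right hs₀pos.le he1,
      (hFpos _ h0 hlt).le, hFle_i₀ _ h0, ?_⟩
    have hsum : s₀ * Real.exp (-(β * ξ t)) + F (ξ t) = V₀ - γ * ξ t := by
      simp only [hF]
      ring
    have h8 : 0 ≤ γ * ξ t := mul_nonneg hγ.le h0
    rw [hsum, hV₀]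
    linarith


private theorem glue3 {t₀ T : ℝ} (ht : t₀ ≤ T) (P : ℝ → ℝ → Prop)
    (Ptrans : ∀ a b c, a ≤ b → b ≤ c → P a b → P b c → P a c)
    (P1 : ∀ a c, a ≤ c → c ≤ t₀ → P a c)
    (P2 : ∀ a c, t₀ ≤ a → a ≤ c → c ≤ T → P a c)
    (P3 : ∀ a c, T ≤ a → a ≤ c → P a c) :
    ∀ a c, a ≤ c → P a c := by
  intro a c hac
  rcases le_total c t₀ with h1 | h1
  · exact P1 a c hac h1
  · rcases le_total a t₀ with h2 | h2
    · rcases le_total c T with h3 | h3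
      · exact Ptrans a t₀ c h2 h1 (P1 a t₀ h2 le_rfl) (P2 t₀ c le_rfl h1 h3)
      · exact Ptrans a t₀ c h2 h1 (P1 a t₀ h2 le_rfl)
          (Ptrans t₀ T c ht h3 (P2 t₀ T le_rfl ht le_rfl) (P3 T c le_rfl h3))
    · rcases le_total c T with h3 | h3
      · exact P2 a c h2 hac h3
      · rcases le_total a T with h4 | h4
        · exact Ptrans a T c h4 h3 (P2 a T h2 h4 le_rfl) (P3 T c le_rfl h3)
        · exact P3 a c h4 hac

theorem ref_S_antitone (p : SIRParams) (S1 I1 : ℝ → ℝ) (href : IsReference p S1 I1) :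
    ∀ a b : ℝ, a ≤ b → S1 b ≤ S1 a := by
  intro a b hab
  have htraj := href.1
  have hI1 := href.2.1
  have hβ : 0 < p.β := p.hγ.trans p.hβγ
  have h := htraj.S_eq a (Set.mem_univ a) b (Set.mem_univ b) hab
  have hnn : 0 ≤ ∫ s in a..b, nullB s * p.β * S1 s * I1 s := by
    apply intervalIntegral.integral_nonneg hab
    intro u _
    simp only [nullB, one_mul]
    have h1 := htraj.Spos u (Set.mem_univ u)
    have h2 := hI1 u
    linarith [mul_pos (mul_pos hβ h1) h2]
  linarith

theorem ref_I_mono (p : SIRParams) (S1 I1 : ℝ → ℝ) (href : IsReference p S1 I1)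
    (c : ℝ) (hc : p.Scrit ≤ S1 c) : ∀ a b : ℝ, a ≤ b → b ≤ c → I1 a ≤ I1 b := by
  intro a b hab hbc
  have htraj := href.1
  have hI1 := href.2.1
  have hβ : 0 < p.β := p.hγ.trans p.hβγ
  have h := htraj.I_eq a (Set.mem_univ a) b (Set.mem_univ b) hab
  have hβS : p.β * p.Scrit = p.γ := by
    simp only [SIRParams.Scrit]; field_simp
  have hnn : 0 ≤ ∫ s in a..b, (nullB s * p.β * S1 s * I1 s - p.γ * I1 s) := by
    apply intervalIntegral.integral_nonneg hab
    intro u hu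
    have hS : p.Scrit ≤ S1 u := hc.trans (ref_S_antitone p S1 I1 href u c (hu.2.trans hbc))
    simp only [nullB, one_mul]
    have h5 : p.γ ≤ p.β * S1 u := by
      have := mul_le_mul_of_nonneg_left hS hβ.le
      linarith [hβS]
    have h6 := mul_le_mul_of_nonneg_right h5 (hI1 u).le
    nlinarith [h6]
  linarith

theorem ref_S_below (p : SIRParams) (S1 I1 : ℝ → ℝ) (href : IsReference p S1 I1) :
    ∃ t : ℝ, S1 t < p.Scrit := by
  by_contra hcon
  push_neg at hcon
  have htraj := href.1
  have hI1 := href.2.1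
  have hβ : 0 < p.β := p.hγ.trans p.hβγ
  have hScrit : 0 < p.Scrit := div_pos p.hγ hβ
  have hmono : ∀ a b : ℝ, a ≤ b → I1 a ≤ I1 b :=
    fun a b hab => ref_I_mono p S1 I1 href b (hcon b) a b hab le_rfl
  have hcS : Continuous S1 := continuousOn_univ.1 htraj.contS
  have hcI : Continuous I1 := continuousOn_univ.1 htraj.contI
  set d := p.β * p.Scrit * I1 0 with hd
  have hdpos : 0 < d := mul_pos (mul_pos hβ hScrit) (hI1 0)
  set t1 := S1 0 / d with ht1
  have ht1pos : 0 ≤ t1 := le_of_lt (div_pos (htraj.Spos 0 (Set.mem_univ _)) hdpos)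
  have h := htraj.S_eq 0 (Set.mem_univ _) t1 (Set.mem_univ _) ht1pos
  have hge : (∫ _ in (0:ℝ)..t1, d) ≤ ∫ s in (0:ℝ)..t1, nullB s * p.β * S1 s * I1 s := by
    apply intervalIntegral.integral_mono_on ht1pos intervalIntegrable_const ?_ ?_
    · apply Continuous.intervalIntegrable
      simp only [nullB]
      fun_prop
    · intro u hu
      simp only [nullB, one_mul]
      have h1 : p.Scrit ≤ S1 u := hcon u
      have h2 : I1 0 ≤ I1 u := hmono 0 u hu.1
      have h3 : p.β * p.Scrit ≤ p.β * S1 u := mul_le_mul_of_nonneg_left h1 hβ.le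
      exact mul_le_mul h3 h2 (hI1 0).le (mul_nonneg hβ.le (htraj.Spos u (Set.mem_univ u)).le)
  rw [intervalIntegral.integral_const, smul_eq_mul] at hge
  have hval : (t1 - 0) * d = S1 0 := by
    rw [ht1]; field_simp; ring
  have hpos := htraj.Spos t1 (Set.mem_univ _)
  linarith

theorem ref_ivt (p : SIRParams) (S1 I1 : ℝ → ℝ) (href : IsReference p S1 I1)
    (τ : ℝ) (hτ : 0 < τ) : ∃ t0 : ℝ, p.γ * τ * I1 t0 = S1 t0 - p.Scrit := by
  have htraj := href.1
  have hI1 := href.2.1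
  have hS1lim := href.2.2.1
  have hI1lim := href.2.2.2
  have hβ : 0 < p.β := p.hγ.trans p.hβγ
  have hScrit1 : p.Scrit < 1 := by
    simp only [SIRParams.Scrit]; rw [div_lt_one hβ]; exact p.hβγ
  obtain ⟨tp, htp⟩ := ref_S_below p S1 I1 href
  have hcS : Continuous S1 := continuousOn_univ.1 htraj.contS
  have hcI : Continuous I1 := continuousOn_univ.1 htraj.contI
  set g : ℝ → ℝ := fun t => p.γ * τ * I1 t - S1 t + p.Scrit with hg
  have hgcont : Continuous g := by fun_prop
  have hgp : 0 < g tp := by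
    simp only [hg]
    nlinarith [mul_pos (mul_pos p.hγ hτ) (hI1 tp)]
  have hglim : Filter.Tendsto g Filter.atBot (nhds (p.γ * τ * 0 - 1 + p.Scrit)) :=
    ((hI1lim.const_mul _).sub hS1lim).add tendsto_const_nhds
  have hneg : ∀ᶠ t in Filter.atBot, g t < 0 := by
    have hlt : p.γ * τ * 0 - 1 + p.Scrit < 0 := by nlinarith
    exact (tendsto_order.1 hglim).2 0 hlt
  obtain ⟨tm, htm1, htm2⟩ := (hneg.and (Filter.eventually_le_atBot tp)).exists
  have hsub := intermediate_value_Icc htm2 hgcont.continuousOn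
  have h0mem : (0:ℝ) ∈ Icc (g tm) (g tp) := ⟨htm1.le, hgp.le⟩
  obtain ⟨t0, _, ht0⟩ := hsub h0mem
  refine ⟨t0, ?_⟩
  simp only [hg] at ht0
  linarith

theorem exists_competitor (p : SIRParams) (S1 I1 : ℝ → ℝ) (href : IsReference p S1 I1)
    (τ : ℝ) (hτ : 0 < τ) :
    ∃ (bi : Intervention p) (S I : ℝ → ℝ), bi.τ = τ ∧ IsControlled p S1 I1 bi S I ∧
      Imax I ≤ (1 - p.Scrit) / (p.γ * τ) := by
  obtain ⟨t₀, key⟩ := ref_ivt p S1 I1 href τ hτ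
  have htraj := href.1
  have hI1pos := href.2.1
  have hβ : 0 < p.β := p.hγ.trans p.hβγ
  have hγ : 0 < p.γ := p.hγ
  have hScritpos : 0 < p.Scrit := div_pos hγ hβ
  have hβScrit : p.β * p.Scrit = p.γ := by
    simp only [SIRParams.Scrit]; field_simp
  set S0 := S1 t₀ with hS0
  set I0 := I1 t₀ with hI0
  have hI0pos : 0 < I0 := hI1pos t₀
  have hS0pos : 0 < S0 := htraj.Spos t₀ (Set.mem_univ _)
  have hS0le1 : S0 ≤ 1 := htraj.Sle_one t₀ (Set.mem_univ _)
  have hS0crit : p.Scrit < S0 := by nlinarith [mul_pos (mul_pos hγ hτ) hI0pos]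
  have hsum01 : S0 + I0 ≤ 1 := htraj.sum_le_one t₀ (Set.mem_univ _)
  have hI0le1 : I0 ≤ 1 := by linarith
  set T := t₀ + τ with hT
  have ht₀T : t₀ < T := by simp only [hT]; linarith
  set Sb : ℝ → ℝ := fun t => S0 - p.γ * I0 * (t - t₀) with hSb
  have hSbt₀ : Sb t₀ = S0 := by simp [hSb]
  have hSbT : Sb T = p.Scrit := by
    simp only [hSb, hT]
    linear_combination (-1 : ℝ) * key
  have hSbmem : ∀ t, t₀ ≤ t → t ≤ T → p.Scrit ≤ Sb t ∧ Sb t ≤ S0 := by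
    intro t h1 h2
    have hTa : Sb T ≤ Sb t := by
      simp only [hSb]
      nlinarith [mul_pos hγ hI0pos]
    rw [hSbT] at hTa
    refine ⟨hTa, ?_⟩
    simp only [hSb]
    nlinarith [mul_pos hγ hI0pos]
  have hSbpos : ∀ t, t₀ ≤ t → t ≤ T → 0 < Sb t :=
    fun t h1 h2 => lt_of_lt_of_le hScritpos (hSbmem t h1 h2).1
  obtain ⟨S2, I2, hS2T, hI2T, hS2c, hI2c, hS2d, hI2d, hbounds2⟩ :=
    sir_post p.β p.γ p.Scrit I0 T hβ hγ rfl hI0pos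
  set bf : ℝ → ℝ := fun t => if t₀ ≤ t ∧ t ≤ T then p.γ / (p.β * Sb t) else 1 with hbf
  set Sc : ℝ → ℝ := fun t => if t ≤ t₀ then S1 t else if t ≤ T then Sb t else S2 t with hSc
  set Ic : ℝ → ℝ := fun t => if t ≤ t₀ then I1 t else if t ≤ T then I0 else I2 t with hIc
  have hbval2 : ∀ t, t₀ ≤ t → t ≤ T → bf t = p.γ / (p.β * Sb t) :=
    fun t h1 h2 => if_pos ⟨h1, h2⟩
  have hbval1 : ∀ t, ¬(t₀ ≤ t ∧ t ≤ T) → bf t = 1 := fun t h => if_neg h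
  have hScval1 : ∀ t, t ≤ t₀ → Sc t = S1 t := fun t ht => if_pos ht
  have hIcval1 : ∀ t, t ≤ t₀ → Ic t = I1 t := fun t ht => if_pos ht
  have hScval2 : ∀ t, t₀ ≤ t → t ≤ T → Sc t = Sb t := by
    intro t h1 h2
    simp only [hSc]
    rcases lt_or_eq_of_le h1 with h | h
    · rw [if_neg (not_le.2 h), if_pos h2]
    · rw [← h, if_pos le_rfl, hSbt₀]
  have hIcval2 : ∀ t, t₀ ≤ t → t ≤ T → Ic t = I0 := by
    intro t h1 h2
    simp only [hIc]
    rcases lt_or_eq_of_le h1 with h | h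
    · rw [if_neg (not_le.2 h), if_pos h2]
    · rw [← h, if_pos le_rfl]
  have hScval3 : ∀ t, T ≤ t → Sc t = S2 t := by
    intro t ht
    simp only [hSc]
    rcases lt_or_eq_of_le ht with h | h
    · rw [if_neg (not_le.2 (ht₀T.trans h)), if_neg (not_le.2 h)]
    · rw [← h, if_neg (not_le.2 ht₀T), if_pos le_rfl, hSbT, hS2T]
  have hIcval3 : ∀ t, T ≤ t → Ic t = I2 t := by
    intro t ht
    simp only [hIc]
    rcases lt_or_eq_of_le ht with h | h
    · rw [if_neg (not_le.2 (ht₀T.trans h)), if_neg (not_le.2 h)]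
    · rw [← h, if_neg (not_le.2 ht₀T), if_pos le_rfl, hI2T]
  have hvalT : ∀ y, T ≤ y → bf y = 1 := by
    intro y hy
    rcases hy.eq_or_lt with h | h
    · rw [← h, hbval2 T ht₀T.le le_rfl, hSbT, hβScrit, div_self hγ.ne']
    · exact hbval1 y (fun hc' => absurd hc'.2 (not_le.2 h))
  have hcS1 : Continuous S1 := continuousOn_univ.1 htraj.contS
  have hcI1 : Continuous I1 := continuousOn_univ.1 htraj.contI
  have hcSb : Continuous Sb := by fun_prop
  have hScCont : Continuous Sc := by
    simp only [hSc]
    apply Continuous.if_le hcS1 ?_ continuous_id continuous_const ?_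
    · apply Continuous.if_le hcSb hS2c continuous_id continuous_const
      intro x hx
      simp only [id_eq] at hx
      rw [hx, hSbT, hS2T]
    · intro x hx
      simp only [id_eq] at hx
      rw [hx, if_pos ht₀T.le, hSbt₀, hS0]
  have hIcCont : Continuous Ic := by
    simp only [hIc]
    apply Continuous.if_le hcI1 ?_ continuous_id continuous_const ?_
    · apply Continuous.if_le continuous_const hI2c continuous_id continuous_const
      intro x hx
      simp only [id_eq] at hx
      rw [hx]
      exact hI2T.symm
    · intro x hx
      simp only [id_eq] at hx
      rw [hx, if_pos ht₀T.le, hI0]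
  have hScbounds : ∀ t, 0 < Sc t ∧ Sc t ≤ 1 := by
    intro t
    rcases le_total t t₀ with h | h
    · rw [hScval1 t h]
      exact ⟨htraj.Spos t (Set.mem_univ _), htraj.Sle_one t (Set.mem_univ _)⟩
    · rcases le_total t T with h2 | h2
      · rw [hScval2 t h h2]
        exact ⟨hSbpos t h h2, (hSbmem t h h2).2.trans hS0le1⟩
      · rw [hScval3 t h2]
        obtain ⟨a1, a2, _, _, _⟩ := hbounds2 t h2
        exact ⟨a1, a2.trans (le_of_lt (hS0crit.trans_le hS0le1))⟩
  have hIcbounds : ∀ t, 0 ≤ Ic t ∧ Ic t ≤ I0 := by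
    intro t
    rcases le_total t t₀ with h | h
    · rw [hIcval1 t h]
      exact ⟨(hI1pos t).le, ref_I_mono p S1 I1 href t₀ hS0crit.le t t₀ h le_rfl⟩
    · rcases le_total t T with h2 | h2
      · rw [hIcval2 t h h2]
        exact ⟨hI0pos.le, le_rfl⟩
      · rw [hIcval3 t h2]
        obtain ⟨_, _, a3, a4, _⟩ := hbounds2 t h2
        exact ⟨a3, a4⟩
  have hsumb : ∀ t, Sc t + Ic t ≤ 1 := by
    intro t
    rcases le_total t t₀ with h | h
    · rw [hScval1 t h, hIcval1 t h]
      exact htraj.sum_le_one t (Set.mem_univ _)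
    · rcases le_total t T with h2 | h2
      · rw [hScval2 t h h2, hIcval2 t h h2]
        have := (hSbmem t h h2).2
        linarith
      · rw [hScval3 t h2, hIcval3 t h2]
        have := (hbounds2 t h2).2.2.2.2
        linarith
  have hb01 : ∀ t, bf t ∈ Set.Icc (0:ℝ) 1 := by
    intro t
    by_cases h : t₀ ≤ t ∧ t ≤ T
    · rw [hbval2 t h.1 h.2]
      have hSbs := hSbpos t h.1 h.2
      constructor
      · positivity
      · rw [div_le_one (by positivity)]
        nlinarith [(hSbmem t h.1 h.2).1]
    · rw [hbval1 t h]
      exact ⟨zero_le_one, le_rfl⟩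
  have hbrc : ∀ t, ContinuousWithinAt bf (Set.Ici t) t := by
    intro t
    rcases lt_or_ge t t₀ with h | h
    · have hev : bf =ᶠ[𝓝[Set.Ici t] t] fun _ => (1:ℝ) := by
        filter_upwards [nhdsWithin_le_nhds (Iio_mem_nhds h)] with y hy
        exact hbval1 y (fun hc' => absurd hc'.1 (not_le.2 hy))
      exact continuousWithinAt_const.congr_of_eventuallyEq hev
        (hbval1 t (fun hc' => absurd hc'.1 (not_le.2 h)))
    · rcases lt_or_ge t T with h2 | h2
      · have hform : ContinuousAt (fun y => p.γ / (p.β * Sb y)) t := by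
          apply ContinuousAt.div continuousAt_const (by fun_prop)
          have := hSbpos t h h2.le
          positivity
      
        have hev : bf =ᶠ[𝓝[Set.Ici t] t] fun y => p.γ / (p.β * Sb y) := by
          filter_upwards [nhdsWithin_le_nhds (Iio_mem_nhds h2), self_mem_nhdsWithin]
            with y hy1 hy2
          exact hbval2 y (h.trans hy2) hy1.le
        exact hform.continuousWithinAt.congr_of_eventuallyEq hev (hbval2 t h h2.le)
      · exact continuousWithinAt_const.congr (fun y hy => hvalT y (h2.trans hy)) (hvalT t h2)
  have hbfd : {t : ℝ | ¬ ContinuousAt bf t}.Finite := by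
    apply Set.Finite.subset (Set.finite_singleton t₀)
    intro t ht'
    simp only [Set.mem_setOf_eq] at ht'
    simp only [Set.mem_singleton_iff]
    by_contra hne
    apply ht'
    rcases lt_trichotomy t t₀ with h | h | h
    · have hev : bf =ᶠ[𝓝 t] fun _ => (1:ℝ) := by
        filter_upwards [Iio_mem_nhds h] with y hy
        exact hbval1 y (fun hc' => absurd hc'.1 (not_le.2 hy))
      exact (continuousAt_congr hev).2 continuousAt_const
    · exact absurd h hne
    · rcases lt_trichotomy t T with h2 | h2 | h2
      · have hev : bf =ᶠ[𝓝 t] fun y => p.γ / (p.β * Sb y) := by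
          filter_upwards [IsOpen.mem_nhds isOpen_Ioo (⟨h, h2⟩ : t ∈ Set.Ioo t₀ T)] with y hy
          exact hbval2 y hy.1.le hy.2.le
        refine (continuousAt_congr hev).2 ?_
        apply ContinuousAt.div continuousAt_const (by fun_prop)
        have := hSbpos t h.le h2.le
        positivity
      · rw [h2, continuousAt_iff_continuous_left_right]
        constructor
        · have hform : ContinuousWithinAt (fun y => p.γ / (p.β * Sb y)) (Set.Iic T) T := by
            apply ContinuousAt.continuousWithinAt
            apply ContinuousAt.div continuousAt_const (by fun_prop)
            rw [hSbT]
            positivity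
          have hev : bf =ᶠ[𝓝[Set.Iic T] T] fun y => p.γ / (p.β * Sb y) := by
            filter_upwards [nhdsWithin_le_nhds (Ioi_mem_nhds ht₀T), self_mem_nhdsWithin]
              with y hy1 hy2
            exact hbval2 y hy1.le hy2
          exact hform.congr_of_eventuallyEq hev (hbval2 T ht₀T.le le_rfl)
        · exact continuousWithinAt_const.congr (fun y hy => hvalT y hy) (hvalT T le_rfl)
      · have hev : bf =ᶠ[𝓝 t] fun _ => (1:ℝ) := by
          filter_upwards [Ioi_mem_nhds h2] with y hy
          exact hbval1 y (fun hc' => absurd hc'.2 (not_le.2 hy))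
        exact (continuousAt_congr hev).2 continuousAt_const
  have hbmeas : Measurable bf := by
    apply Measurable.ite
    · exact (measurableSet_Icc : MeasurableSet (Set.Icc t₀ T))
    · exact measurable_const.div ((continuous_const.mul hcSb).measurable)
    · exact measurable_const
  set f : ℝ → ℝ := fun s => bf s * p.β * Sc s * Ic s with hfdef
  set g : ℝ → ℝ := fun s => bf s * p.β * Sc s * Ic s - p.γ * Ic s with hgdef
  have hfmeas : Measurable f :=
    ((hbmeas.mul measurable_const).mul hScCont.measurable).mul hIcCont.measurable
  have hfbound : ∀ s, 0 ≤ f s ∧ f s ≤ p.β := by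
    intro s
    have hb := hb01 s
    have hS := hScbounds s
    have hI := hIcbounds s
    have hIle1 : Ic s ≤ 1 := hI.2.trans hI0le1
    constructor
    · exact mul_nonneg (mul_nonneg (mul_nonneg hb.1 hβ.le) hS.1.le) hI.1
    · have hstep1 : bf s * p.β ≤ p.β := by nlinarith [hb.2]
      have hstep2 : bf s * p.β * Sc s ≤ p.β * 1 :=
        mul_le_mul hstep1 hS.2 hS.1.le hβ.le
      have hstep3 : bf s * p.β * Sc s * Ic s ≤ p.β * 1 * 1 :=
        mul_le_mul (by linarith) hIle1 hI.1 (by positivity)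
      simpa using hstep3
  have hintf : ∀ a c : ℝ, IntervalIntegrable f volume a c := by
    intro a c
    rw [intervalIntegrable_iff]
    apply MeasureTheory.Integrable.mono' (g := fun _ => p.β)
    · exact integrableOn_const measure_Ioc_lt_top.ne
    · exact hfmeas.aestronglyMeasurable.restrict
    · filter_upwards with s
      rw [Real.norm_eq_abs, abs_of_nonneg (hfbound s).1]
      exact (hfbound s).2
  have hintg : ∀ a c : ℝ, IntervalIntegrable g volume a c := by
    intro a c
    have : g = fun s => f s - p.γ * Ic s := rfl
    rw [this]
    exact (hintf a c).sub ((continuous_const.mul hIcCont).intervalIntegrable a c)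
  have hae : ∀ᵐ s : ℝ ∂volume, s ≠ t₀ := by
    rw [MeasureTheory.ae_iff]
    have hset' : {s : ℝ | ¬ s ≠ t₀} = {t₀} := by ext x; simp
    rw [hset']
    exact Real.volume_singleton
  have hP : ∀ a c : ℝ, a ≤ c → Sc c = Sc a - ∫ s in a..c, f s := by
    apply glue3 ht₀T.le
    · intro a b c _ _ h1 h2
      rw [h2, h1, ← intervalIntegral.integral_add_adjacent_intervals (hintf a b) (hintf b c)]
      ring
    · intro a c hac hct₀
      have heq := htraj.S_eq a (Set.mem_univ _) c (Set.mem_univ _) hac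
      rw [hScval1 a (hac.trans hct₀), hScval1 c hct₀, heq]
      congr 1
      apply intervalIntegral.integral_congr_ae
      filter_upwards [hae] with s hs hmem
      rw [Set.uIoc_of_le hac] at hmem
      have hslt : s < t₀ := lt_of_le_of_ne (hmem.2.trans hct₀) hs
      simp only [hfdef, nullB]
      rw [hbval1 s (fun hc' => absurd hc'.1 (not_le.2 hslt)), hScval1 s hslt.le,
        hIcval1 s hslt.le]
    · intro a c ht₀a hac hcT
      rw [hScval2 a ht₀a (hac.trans hcT), hScval2 c (ht₀a.trans hac) hcT]
      have hint : (∫ s in a..c, f s) = ∫ _ in a..c, p.γ * I0 := by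
        apply intervalIntegral.integral_congr
        intro s hs
        rw [Set.uIcc_of_le hac] at hs
        have h1 : t₀ ≤ s := ht₀a.trans hs.1
        have h2 : s ≤ T := hs.2.trans hcT
        have hSbs := hSbpos s h1 h2
        simp only [hfdef]
        rw [hbval2 s h1 h2, hScval2 s h1 h2, hIcval2 s h1 h2]
        field_simp
      rw [hint, intervalIntegral.integral_const, smul_eq_mul]
      simp only [hSb]
      ring
    · intro a c hTa hac
      rw [hScval3 a hTa, hScval3 c (hTa.trans hac)]
      have hftc := intervalIntegral.integral_eq_sub_of_hasDeriv_right_of_le hac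
        (hS2c.continuousOn) (f' := fun s => -(f s)) ?_ ((hintf a c).neg)
      · rw [intervalIntegral.integral_neg] at hftc
        have h2 : (∫ s in a..c, f s) = S2 a - S2 c := by linarith
        rw [h2]
        ring
      · intro x hx
        have hTx : T < x := lt_of_le_of_lt hTa hx.1
        have hfx : f x = p.β * S2 x * I2 x := by
          simp only [hfdef]
          rw [hbval1 x (fun hc' => absurd hc'.2 (not_le.2 hTx)), hScval3 x hTx.le,
            hIcval3 x hTx.le]
          ring
        show HasDerivWithinAt S2 (-(f x)) (Set.Ioi x) x
        rw [hfx]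
        exact (hS2d x hTx).hasDerivWithinAt
  have hQ : ∀ a c : ℝ, a ≤ c → Ic c = Ic a + ∫ s in a..c, g s := by
    apply glue3 ht₀T.le
    · intro a b c _ _ h1 h2
      rw [h2, h1, ← intervalIntegral.integral_add_adjacent_intervals (hintg a b) (hintg b c)]
      ring
    · intro a c hac hct₀
      have heq := htraj.I_eq a (Set.mem_univ _) c (Set.mem_univ _) hac
      rw [hIcval1 a (hac.trans hct₀), hIcval1 c hct₀, heq]
      congr 1
      apply intervalIntegral.integral_congr_ae
      filter_upwards [hae] with s hs hmem
      rw [Set.uIoc_of_le hac] at hmem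
      have hslt : s < t₀ := lt_of_le_of_ne (hmem.2.trans hct₀) hs
      simp only [hgdef, nullB]
      rw [hbval1 s (fun hc' => absurd hc'.1 (not_le.2 hslt)), hScval1 s hslt.le,
        hIcval1 s hslt.le]
    · intro a c ht₀a hac hcT
      rw [hIcval2 a ht₀a (hac.trans hcT), hIcval2 c (ht₀a.trans hac) hcT]
      have hint : (∫ s in a..c, g s) = ∫ _ in a..c, (0:ℝ) := by
        apply intervalIntegral.integral_congr
        intro s hs
        rw [Set.uIcc_of_le hac] at hs
        have h1 : t₀ ≤ s := ht₀a.trans hs.1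
        have h2 : s ≤ T := hs.2.trans hcT
        have hSbs := hSbpos s h1 h2
        simp only [hgdef]
        rw [hbval2 s h1 h2, hScval2 s h1 h2, hIcval2 s h1 h2]
        field_simp
        ring
      rw [hint]
      simp
    · intro a c hTa hac
      rw [hIcval3 a hTa, hIcval3 c (hTa.trans hac)]
      have hftc := intervalIntegral.integral_eq_sub_of_hasDeriv_right_of_le hac
        (hI2c.continuousOn) (f' := g) ?_ (hintg a c)
      · rw [hftc]
        ring
      · intro x hx
        have hTx : T < x := lt_of_le_of_lt hTa hx.1
        have hgx : g x = (p.β * S2 x - p.γ) * I2 x := by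
          simp only [hgdef]
          rw [hbval1 x (fun hc' => absurd hc'.2 (not_le.2 hTx)), hScval3 x hTx.le,
            hIcval3 x hTx.le]
          ring
        show HasDerivWithinAt I2 (g x) (Set.Ioi x) x
        rw [hgx]
        exact (hI2d x hTx).hasDerivWithinAt
  have htrajC : IsSIRTrajectory p bf Set.univ Sc Ic := by
    refine ⟨fun t _ s _ => Set.mem_univ s, hScCont.continuousOn, hIcCont.continuousOn,
      fun t _ => (hScbounds t).1, fun t _ => (hScbounds t).2,
      fun t _ => (hIcbounds t).1, fun t _ => hsumb t, ?_, ?_⟩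
    · intro a _ c _ hac
      exact hP a c hac
    · intro a _ c _ hac
      exact hQ a c hac
  have houtside : ∀ t, t ∉ Set.Icc t₀ (t₀ + τ) → bf t = 1 := by
    intro t ht'
    apply hbval1
    intro hc'
    exact ht' ⟨hc'.1, hc'.2⟩
  refine ⟨⟨bf, t₀, τ, hτ, hb01, hbrc, hbfd, houtside⟩, Sc, Ic, rfl, ⟨htrajC, ?_⟩, ?_⟩
  · intro t ht
    exact ⟨hScval1 t ht, hIcval1 t ht⟩
  · have h1 : Imax Ic ≤ I0 := by
      apply csSup_le (Set.range_nonempty Ic)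
      rintro y ⟨t, rfl⟩
      exact (hIcbounds t).2
    have h2 : I0 ≤ (1 - p.Scrit) / (p.γ * τ) := by
      rw [le_div_iff₀ (by positivity)]
      have h3 : I0 * (p.γ * τ) = p.γ * τ * I0 := by ring
      linarith [key, hS0le1]
    exact h1.trans h2

/-- If you have lots of gunpowder, shoot early: the prevalence
at the start of an optimal intervention of duration τ is at most
`(1 − Scrit)/(γτ)`; hence as τ → ∞ the optimal intervention starts with
`I(t_i) → 0` and `S(t_i) → 1`. -/
theorem lots_of_gunpowder_shoot_early (p : SIRParams) (S1 I1 : ℝ → ℝ)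
    (href : IsReference p S1 I1)
    (bfam : ℝ → Intervention p) (Sfam Ifam : ℝ → ℝ → ℝ)
    (hfam : ∀ τ, 0 < τ → (bfam τ).τ = τ ∧
      IsOptimal p S1 I1 (bfam τ) (Sfam τ) (Ifam τ)) :
    (∀ τ, 0 < τ → Ifam τ ((bfam τ).ti) ≤ (1 - p.Scrit) / (p.γ * τ)) ∧
    Filter.Tendsto (fun τ => Ifam τ ((bfam τ).ti)) Filter.atTop (nhds 0) ∧
    Filter.Tendsto (fun τ => Sfam τ ((bfam τ).ti)) Filter.atTop (nhds 1) := by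
  have hβ : 0 < p.β := p.hγ.trans p.hβγ
  have hScrit1 : p.Scrit < 1 := by
    simp only [SIRParams.Scrit]; rw [div_lt_one hβ]; exact p.hβγ
  have hS1lim := href.2.2.1
  have hI1pos := href.2.1
  have key : ∀ τ, 0 < τ → Imax (Ifam τ) ≤ (1 - p.Scrit) / (p.γ * τ) := by
    intro τ hτ
    obtain ⟨hτeq, hctrl, hopt⟩ := hfam τ hτ
    obtain ⟨bi, S, I, hbiτ, hctrl2, hIle⟩ := exists_competitor p S1 I1 href τ hτ
    have h := hopt bi (by rw [hbiτ, hτeq]) S I hctrl2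
    exact h.trans hIle
  have hbdd : ∀ τ, 0 < τ → BddAbove (Set.range (Ifam τ)) := by
    intro τ hτ
    obtain ⟨hτeq, hctrl, hopt⟩ := hfam τ hτ
    refine ⟨1, ?_⟩
    rintro y ⟨t, rfl⟩
    have h1 := hctrl.1.sum_le_one t (Set.mem_univ _)
    have h2 := hctrl.1.Spos t (Set.mem_univ _)
    linarith
  have claim1 : ∀ τ, 0 < τ → Ifam τ ((bfam τ).ti) ≤ (1 - p.Scrit) / (p.γ * τ) := by
    intro τ hτ
    exact (le_csSup (hbdd τ hτ) (Set.mem_range_self _)).trans (key τ hτ)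
  refine ⟨claim1, ?_, ?_⟩
  · have hup : Filter.Tendsto (fun τ => (1 - p.Scrit) / (p.γ * τ)) Filter.atTop (nhds 0) :=
      Filter.Tendsto.div_atTop tendsto_const_nhds
        (Filter.Tendsto.const_mul_atTop p.hγ Filter.tendsto_id)
    apply tendsto_of_tendsto_of_tendsto_of_le_of_le' tendsto_const_nhds hup
    · filter_upwards [Filter.eventually_gt_atTop 0] with τ hτ
      exact (hfam τ hτ).2.1.1.Inonneg _ (Set.mem_univ _)
    · filter_upwards [Filter.eventually_gt_atTop 0] with τ hτ
      exact claim1 τ hτ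
  · rw [Metric.tendsto_atTop]
    intro ε hε
    have h1 : ∀ᶠ t in Filter.atBot, 1 - ε / 2 < S1 t :=
      (tendsto_order.1 hS1lim).1 _ (by linarith)
    obtain ⟨tε, htε⟩ := h1.exists
    have hc₀ : 0 < I1 tε := hI1pos tε
    refine ⟨max 1 ((1 - p.Scrit) / (p.γ * I1 tε) + 1), fun τ hτN => ?_⟩
    have hτ1 : (1:ℝ) ≤ τ := le_trans (le_max_left _ _) hτN
    have hτ : 0 < τ := lt_of_lt_of_le one_pos hτ1
    obtain ⟨hτeq, hctrl, hopt⟩ := hfam τ hτ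
    have hbound : (1 - p.Scrit) / (p.γ * τ) < I1 tε := by
      have h2 : (1 - p.Scrit) / (p.γ * I1 tε) + 1 ≤ τ := le_trans (le_max_right _ _) hτN
      rw [div_lt_iff₀ (mul_pos p.hγ hτ)]
      have h3 : 0 < p.γ * I1 tε := mul_pos p.hγ hc₀
      have h4 : (1 - p.Scrit) / (p.γ * I1 tε) * (p.γ * I1 tε) = 1 - p.Scrit :=
        div_mul_cancel₀ _ h3.ne'
      nlinarith
    have hti : (bfam τ).ti < tε := by
      by_contra hcon
      push_neg at hcon
      have h5 : Ifam τ tε = I1 tε := (hctrl.2 tε hcon).2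
      have h6 : Ifam τ tε ≤ Imax (Ifam τ) := le_csSup (hbdd τ hτ) (Set.mem_range_self _)
      have h7 := key τ hτ
      linarith
    have hSeq : Sfam τ ((bfam τ).ti) = S1 ((bfam τ).ti) := (hctrl.2 _ le_rfl).1
    have hmono := ref_S_antitone p S1 I1 href ((bfam τ).ti) tε hti.le
    have hle1 : S1 ((bfam τ).ti) ≤ 1 := href.1.Sle_one _ (Set.mem_univ _)
    rw [hSeq, Real.dist_eq, abs_of_nonpos (by linarith)]
    linarith
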